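/- Explicit projection onto the half-cylinder used in the augmented Lagrangian method: let R ≥ 0 and let C_R = {x ∈ E : x_n ≥ 0 and ‖x_t‖ ≤ R}. For τ ∈ E, the point p = (max 0 τ_n) • n + (min 1 (R / ‖τ_t‖)) • τ_t is the orthogonal projection of τ onto C_R; that is, p ∈ C_R and for every s ∈ C_R one has ‖τ - p‖ ≤ ‖τ - s‖. (Here if τ_t = 0 the tangential term is 0, and if ‖τ_t‖ ≤ R the tangential component of p is τ_t, while if ‖τ_t‖ > R it is (R/‖τ_t‖) • τ_t.) -/

import Mathlib

open scoped InnerProductSpace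

noncomputable section

/-- The ambient space `E = ℝ³`. -/
abbrev E := EuclideanSpace ℝ (Fin 3)

/-- Normal component of `x` relative to the unit normal `n`. -/
def xn (n x : E) : ℝ := ⟪x, n⟫_ℝ

/-- Tangential component of `x` relative to the unit normal `n`. -/
def xt (n x : E) : E := x - (⟪x, n⟫_ℝ) • n

/-- The Coulomb cone with friction coefficient `μ`. -/
def Kcone (n : E) (μ : ℝ) : Set E := {r | ‖xt n r‖ ≤ μ * xn n r}

lemma inner_xt_eq_zero (n x : E) (hn : ‖n‖ = 1) : ⟪xt n x, n⟫_ℝ = 0 := by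
  have h : ⟪n, n⟫_ℝ = 1 := by rw [real_inner_self_eq_norm_sq, hn]; norm_num
  unfold xt
  rw [inner_sub_left, real_inner_smul_left, h, mul_one, sub_self]

lemma norm_sq_decomp (n : E) (hn : ‖n‖ = 1) (c : ℝ) (u : E) (hu : ⟪u, n⟫_ℝ = 0) :
    ‖c • n + u‖ ^ 2 = c ^ 2 + ‖u‖ ^ 2 := by
  rw [norm_add_sq_real]
  have h1 : ⟪c • n, u⟫_ℝ = 0 := by
    rw [real_inner_smul_left, real_inner_comm, hu, mul_zero]
  have h2 : ‖c • n‖ = |c| := by rw [norm_smul, hn, mul_one]; rfl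
  rw [h1, h2, sq_abs]; ring

/-- Explicit orthogonal projection onto the half-cylinder
`C_R = {x : 0 ≤ x_n ∧ ‖x_t‖ ≤ R}` used in the augmented Lagrangian method. -/
theorem halfcylinder_projection (n : E) (hn : ‖n‖ = 1) (R : ℝ) (hR : 0 ≤ R) (τ : E) :
    (max 0 (xn n τ)) • n + (min 1 (R / ‖xt n τ‖)) • xt n τ
      ∈ {x : E | 0 ≤ xn n x ∧ ‖xt n x‖ ≤ R} ∧
    ∀ s ∈ {x : E | 0 ≤ xn n x ∧ ‖xt n x‖ ≤ R},
      ‖τ - ((max 0 (xn n τ)) • n + (min 1 (R / ‖xt n τ‖)) • xt n τ)‖ ≤ ‖τ - s‖ := by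
  set a : ℝ := max 0 (xn n τ) with ha
  set b : ℝ := min 1 (R / ‖xt n τ‖) with hb
  set u : E := xt n τ with hu
  set p : E := a • n + b • u with hp
  have hnn : ⟪n, n⟫_ℝ = 1 := by
    rw [real_inner_self_eq_norm_sq, hn]; norm_num
  have hun : ⟪u, n⟫_ℝ = 0 := inner_xt_eq_zero n τ hn
  have hb0 : 0 ≤ b := le_min one_pos.le (div_nonneg hR (norm_nonneg _))
  have hb1 : b ≤ 1 := min_le_left _ _
  have hpn : xn n p = a := by
    simp only [xn, hp, inner_add_left, real_inner_smul_left, hnn, hun]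
    ring
  have hpt : xt n p = b • u := by
    simp only [xt, ← xn.eq_def, hpn]; rw [hp]
    abel
  have hbu : ‖b • u‖ ≤ R := by
    rw [norm_smul, Real.norm_eq_abs, abs_of_nonneg hb0]
    rcases le_or_gt ‖u‖ R with h | h
    · calc b * ‖u‖ ≤ 1 * ‖u‖ := by
            exact mul_le_mul_of_nonneg_right hb1 (norm_nonneg _)
        _ ≤ R := by rw [one_mul]; exact h
    · have hupos : 0 < ‖u‖ := lt_of_le_of_lt hR h
      calc b * ‖u‖ ≤ (R / ‖u‖) * ‖u‖ :=
            mul_le_mul_of_nonneg_right (min_le_right _ _) (norm_nonneg _)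
        _ = R := div_mul_cancel₀ R (ne_of_gt hupos)
  refine ⟨⟨by rw [hpn]; exact le_max_left _ _, by rw [hpt]; exact hbu⟩, ?_⟩
  intro s hs
  obtain ⟨hsn, hst⟩ := hs
  -- decompositions
  have hτ : τ = (xn n τ) • n + u := by simp only [hu, xt, xn]; abel
  have hs' : s = (xn n s) • n + xt n s := by simp only [xt, xn]; abel
  have hτp : τ - p = (xn n τ - a) • n + (u - b • u) := by
    rw [hp]
    nth_rewrite 1 [hτ]
    rw [sub_smul]
    abel
  have hτs : τ - s = (xn n τ - xn n s) • n + (u - xt n s) := by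
    nth_rewrite 1 [hτ]
    nth_rewrite 1 [hs']
    rw [sub_smul]
    abel
  have hinner1 : ⟪u - b • u, n⟫_ℝ = 0 := by
    rw [inner_sub_left, real_inner_smul_left, hun]; ring
  have hinner2 : ⟪u - xt n s, n⟫_ℝ = 0 := by
    rw [inner_sub_left, hun, inner_xt_eq_zero n s hn]; ring
  have e1 : ‖τ - p‖ ^ 2 = (xn n τ - a) ^ 2 + ‖u - b • u‖ ^ 2 := by
    rw [hτp]; exact norm_sq_decomp n hn _ _ hinner1
  have e2 : ‖τ - s‖ ^ 2 = (xn n τ - xn n s) ^ 2 + ‖u - xt n s‖ ^ 2 := by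
    rw [hτs]; exact norm_sq_decomp n hn _ _ hinner2
  -- normal part comparison
  have hN : (xn n τ - a) ^ 2 ≤ (xn n τ - xn n s) ^ 2 := by
    rcases le_or_gt 0 (xn n τ) with h | h
    · rw [ha, max_eq_right h]; simpa using sq_nonneg _
    · rw [ha, max_eq_left h.le, sub_zero]
      nlinarith
  -- tangential part comparison
  have hT : ‖u - b • u‖ ^ 2 ≤ ‖u - xt n s‖ ^ 2 := by
    rcases le_or_gt ‖u‖ R with h | h
    · have : b • u = u := by
        rcases eq_or_ne u 0 with h0 | h0
        · rw [h0, smul_zero]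
        · have hupos : 0 < ‖u‖ := norm_pos_iff.mpr h0
          have : (1 : ℝ) ≤ R / ‖u‖ := (one_le_div hupos).mpr h
          rw [hb, min_eq_left this, one_smul]
      rw [this, sub_self, norm_zero]
      nlinarith [sq_nonneg ‖u - xt n s‖]
    · have hupos : 0 < ‖u‖ := lt_of_le_of_lt hR h
      have hb' : b = R / ‖u‖ := by
        rw [hb, min_eq_right]
        exact le_of_lt ((div_lt_one hupos).mpr h)
      have : ‖u - b • u‖ = ‖u‖ - R := by
        have : u - b • u = (1 - b) • u := by rw [sub_smul, one_smul]
        rw [this, norm_smul, Real.norm_eq_abs, abs_of_nonneg (by linarith), hb']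
        field_simp
      rw [this]
      have h1 : ‖u‖ - R ≤ ‖u - xt n s‖ := by
        calc ‖u‖ - R ≤ ‖u‖ - ‖xt n s‖ := by linarith
          _ ≤ ‖u - xt n s‖ := norm_sub_norm_le _ _
      have h2 : 0 ≤ ‖u‖ - R := by linarith
      exact pow_le_pow_left₀ h2 h1 2
  have : ‖τ - p‖ ^ 2 ≤ ‖τ - s‖ ^ 2 := by rw [e1, e2]; linarith
  exact (pow_le_pow_iff_left₀ (norm_nonneg _) (norm_nonneg _) two_ne_zero).mp this
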